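/- Let f in Q[[q]] be the unique solution of L1 f = 0 with constant coefficient 1. Then there exists a unique formal power series g in Q[[q]] with zero constant coefficient such that L1~(t*f + g) = 0. (t*f + g is the logarithmic solution I_1 = ln(q)*I_0 + sum b_d q^d of the Picard-Fuchs equation.) -/

import Mathlib

open PowerSeries

/-- The operator `D = q * d/dq` on `ℚ[[q]]`. -/
noncomputable def Dop (f : ℚ⟦X⟧) : ℚ⟦X⟧ := X * derivative ℚ f

/-- Coefficient of `D^4` in the Picard-Fuchs operator. -/
noncomputable def A4 : ℚ⟦X⟧ := (1 - 289 * X - 57 * X ^ 2 + X ^ 3) * (1 - 3 * X) ^ 2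
/-- Coefficient of `D^3` in the Picard-Fuchs operator. -/
noncomputable def A3 : ℚ⟦X⟧ := 4 * X * (3 * X - 1) * (143 + 57 * X - 87 * X ^ 2 + 3 * X ^ 3)
/-- Coefficient of `D^2` in the Picard-Fuchs operator. -/
noncomputable def A2 : ℚ⟦X⟧ :=
  2 * X * (-212 - 473 * X + 725 * X ^ 2 - 435 * X ^ 3 + 27 * X ^ 4)
/-- Coefficient of `D^1` in the Picard-Fuchs operator. -/
noncomputable def A1 : ℚ⟦X⟧ :=
  2 * X * (-69 - 481 * X + 159 * X ^ 2 - 171 * X ^ 3 + 18 * X ^ 4)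
/-- Coefficient of `D^0` in the Picard-Fuchs operator. -/
noncomputable def A0 : ℚ⟦X⟧ := X * (-17 - 202 * X - 8 * X ^ 2 - 54 * X ^ 3 + 9 * X ^ 4)

/-- The Picard-Fuchs operator of Rødland's mirror family of the Pfaffian
Calabi-Yau 3-fold, acting on `ℚ[[q]]` (here `q` is `PowerSeries.X`). -/
noncomputable def L1 (f : ℚ⟦X⟧) : ℚ⟦X⟧ :=
  A4 * Dop^[4] f + A3 * Dop^[3] f + A2 * Dop^[2] f + A1 * Dop f + A0 * f

/-- The extension of `D` to the derivation on `ℚ[[q]][t]` with `D t = 1`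
(where `t` plays the role of `ln q`). -/
noncomputable def Dt (y : Polynomial ℚ⟦X⟧) : Polynomial ℚ⟦X⟧ :=
  Polynomial.derivative y + y.sum fun n a => Polynomial.C (Dop a) * Polynomial.X ^ n

/-- The Picard-Fuchs operator acting on `ℚ[[q]][t]`, with `D` replaced by its
extension `Dt`. -/
noncomputable def L1t (y : Polynomial ℚ⟦X⟧) : Polynomial ℚ⟦X⟧ :=
    Polynomial.C A4 * Dt^[4] y + Polynomial.C A3 * Dt^[3] y
  + Polynomial.C A2 * Dt^[2] y + Polynomial.C A1 * Dt y + Polynomial.C A0 * y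

section Scratch
open Finset

lemma coeff_Dop (f : ℚ⟦X⟧) (n : ℕ) : coeff n (Dop f) = n * coeff n f := by
  unfold Dop
  cases n with
  | zero => simp
  | succ m =>
    rw [coeff_succ_X_mul, coeff_derivative]
    push_cast; ring

lemma coeff_Dop_iter (j : ℕ) (f : ℚ⟦X⟧) (n : ℕ) :
    coeff n (Dop^[j] f) = (n : ℚ) ^ j * coeff n f := by
  induction j with
  | zero => simp
  | succ k ih =>
    rw [Function.iterate_succ_apply', coeff_Dop, ih]
    ring

/-- coefficient kernel of `L1`. -/
noncomputable def Pc (n i : ℕ) : ℚ :=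
    coeff (n - i) A4 * (i : ℚ) ^ 4 + coeff (n - i) A3 * (i : ℚ) ^ 3
  + coeff (n - i) A2 * (i : ℚ) ^ 2 + coeff (n - i) A1 * (i : ℚ) + coeff (n - i) A0

lemma coeff_mul_Dop_iter (A g : ℚ⟦X⟧) (j n : ℕ) :
    coeff n (A * Dop^[j] g) =
      ∑ i ∈ range (n + 1), coeff (n - i) A * ((i : ℚ) ^ j * coeff i g) := by
  rw [mul_comm, coeff_mul, Finset.Nat.sum_antidiagonal_eq_sum_range_succ
    (fun a b => coeff a (Dop^[j] g) * coeff b A)]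
  exact Finset.sum_congr rfl fun i _ => by rw [coeff_Dop_iter]; ring

lemma coeff_L1 (g : ℚ⟦X⟧) (n : ℕ) :
    coeff n (L1 g) = ∑ i ∈ range (n + 1), Pc n i * coeff i g := by
  unfold L1
  have h1 : coeff n (A1 * Dop g)
      = ∑ i ∈ range (n + 1), coeff (n - i) A1 * ((i : ℚ) * coeff i g) := by
    simpa using coeff_mul_Dop_iter A1 g 1 n
  have h0 : coeff n (A0 * g)
      = ∑ i ∈ range (n + 1), coeff (n - i) A0 * coeff i g := by
    simpa using coeff_mul_Dop_iter A0 g 0 n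
  rw [map_add, map_add, map_add, map_add, coeff_mul_Dop_iter, coeff_mul_Dop_iter,
    coeff_mul_Dop_iter, h1, h0, ← Finset.sum_add_distrib, ← Finset.sum_add_distrib,
    ← Finset.sum_add_distrib, ← Finset.sum_add_distrib]
  exact Finset.sum_congr rfl fun i _ => by simp only [Pc]; ring

lemma constCoeffs : constantCoeff A4 = 1 ∧ constantCoeff A3 = 0 ∧ constantCoeff A2 = 0
    ∧ constantCoeff A1 = 0 ∧ constantCoeff A0 = 0 := by
  unfold A4 A3 A2 A1 A0
  simp

lemma Pc_diag (n : ℕ) : Pc n n = (n : ℚ) ^ 4 := by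
  obtain ⟨h4, h3, h2, h1, h0⟩ := constCoeffs
  simp [Pc, Nat.sub_self, coeff_zero_eq_constantCoeff, h4, h3, h2, h1, h0]

end Scratch
section Scratch2
open Finset

/-- Recursive solution coefficients for `L1 g = h`. -/
noncomputable def solc (h : ℚ⟦X⟧) : ℕ → ℚ
  | n =>
    (coeff n h - ∑ i ∈ (Finset.range n).attach,
        Pc n i.1 * solc h i.1) / (n : ℚ) ^ 4
  decreasing_by exact Finset.mem_range.mp i.2

lemma solc_zero (h : ℚ⟦X⟧) : solc h 0 = 0 := by
  rw [solc]; simp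

lemma solc_spec (h : ℚ⟦X⟧) {n : ℕ} (hn : n ≠ 0) :
    (n : ℚ) ^ 4 * solc h n = coeff n h - ∑ i ∈ Finset.range n, Pc n i * solc h i := by
  have hn4 : ((n : ℚ)) ^ 4 ≠ 0 := by positivity
  rw [solc, ← Finset.sum_attach (Finset.range n) (fun i => Pc n i * solc h i)]
  field_simp

lemma L1_mk_solc (h : ℚ⟦X⟧) (h0 : constantCoeff h = 0) : L1 (mk (solc h)) = h := by
  ext n
  rw [coeff_L1, Finset.sum_range_succ, Pc_diag]
  simp only [coeff_mk]
  rcases Nat.eq_zero_or_pos n with h' | h'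
  · subst h'
    simp [solc_zero, coeff_zero_eq_constantCoeff, h0]
  · rw [solc_spec h h'.ne']
    ring

end Scratch2
section Scratch3
open Finset

lemma L1_injOn {g₁ g₂ : ℚ⟦X⟧} (h₁ : constantCoeff g₁ = 0) (h₂ : constantCoeff g₂ = 0)
    (he : L1 g₁ = L1 g₂) : g₁ = g₂ := by
  ext n
  induction n using Nat.strong_induction_on with
  | _ n ih =>
    rcases Nat.eq_zero_or_pos n with h' | h'
    · subst h'
      simp [coeff_zero_eq_constantCoeff, h₁, h₂]
    · have := congrArg (coeff n) he
      rw [coeff_L1, coeff_L1, Finset.sum_range_succ, Finset.sum_range_succ, Pc_diag] at this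
      have hsum : ∑ i ∈ Finset.range n, Pc n i * coeff i g₁
          = ∑ i ∈ Finset.range n, Pc n i * coeff i g₂ :=
        Finset.sum_congr rfl fun i hi => by rw [ih i (Finset.mem_range.mp hi)]
      rw [hsum] at this
      have hn4 : ((n : ℚ)) ^ 4 ≠ 0 := by positivity
      exact mul_left_cancel₀ hn4 (add_left_cancel this)

lemma existsUnique_L1 (h : ℚ⟦X⟧) (h0 : constantCoeff h = 0) :
    ∃! g : ℚ⟦X⟧, constantCoeff g = 0 ∧ L1 g = h := by
  refine ⟨mk (solc h), ⟨?_, L1_mk_solc h h0⟩, ?_⟩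
  · simpa using solc_zero h
  · rintro g ⟨hg0, hg⟩
    exact L1_injOn hg0 (by simpa using solc_zero h) (by rw [hg, L1_mk_solc h h0])

end Scratch3
section Scratch4

lemma Dop_add (a b : ℚ⟦X⟧) : Dop (a + b) = Dop a + Dop b := by
  simp [Dop, mul_add]

lemma Dop_zero : Dop 0 = 0 := by simp [Dop]

lemma dt_step (u v : ℚ⟦X⟧) :
    Dt (Polynomial.X * Polynomial.C u + Polynomial.C v)
      = Polynomial.X * Polynomial.C (Dop u) + Polynomial.C (u + Dop v) := by
  unfold Dt
  have hX : (Polynomial.X * Polynomial.C u : Polynomial ℚ⟦X⟧) = Polynomial.monomial 1 u := by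
    rw [mul_comm, Polynomial.C_mul_X_eq_monomial]
  have hC : (Polynomial.C v : Polynomial ℚ⟦X⟧) = Polynomial.monomial 0 v := by
    rw [Polynomial.monomial_zero_left]
  rw [hX, hC, Polynomial.sum_add_index, Polynomial.sum_monomial_index,
    Polynomial.sum_monomial_index]
  · rw [Polynomial.derivative_add, Polynomial.derivative_monomial, Polynomial.derivative_monomial]
    simp only [pow_one, pow_zero, mul_one, Nat.cast_one, Nat.cast_zero, mul_zero,
      Polynomial.monomial_zero_right, add_zero, Polynomial.monomial_zero_left, map_add]
    rw [Polynomial.monomial_zero_left]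
    ring
  · simp [Dop_zero]
  · simp [Dop_zero]
  · intro n; simp [Dop_zero]
  · intro n a b; simp [Dop_add, add_mul]

end Scratch4
section Scratch5

lemma L1t_eq (f g : ℚ⟦X⟧) :
    L1t (Polynomial.X * Polynomial.C f + Polynomial.C g)
      = Polynomial.X * Polynomial.C (L1 f)
        + Polynomial.C (L1 g + (4 * A4 * Dop^[3] f + 3 * A3 * Dop^[2] f
            + 2 * A2 * Dop f + A1 * f)) := by
  have e1 := dt_step f g
  have e2 := dt_step (Dop f) (f + Dop g)
  have e3 := dt_step (Dop (Dop f)) (Dop f + Dop (f + Dop g))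
  have e4 := dt_step (Dop (Dop (Dop f))) (Dop (Dop f) + Dop (Dop f + Dop (f + Dop g)))
  unfold L1t
  simp only [Function.iterate_succ, Function.iterate_zero, Function.comp_apply, id_eq]
  rw [e1, e2, e3, e4]
  simp only [L1, Function.iterate_succ, Function.iterate_zero, Function.comp_apply, id_eq,
    Dop_add, map_add, map_mul, map_ofNat]
  ring

end Scratch5
lemma constantCoeff_Dop (u : ℚ⟦X⟧) : constantCoeff (Dop u) = 0 := by
  simp [Dop]

/-- Given the holomorphic solution `f = I₀` of the Picard-Fuchs equation, there is a
unique power series `g` with zero constant coefficient such that `t*f + g` is a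
solution of the Picard-Fuchs equation on `ℚ[[q]][t]` (the logarithmic solution
`I₁ = ln(q) I₀ + Σ b_d q^d`). -/
theorem pfaffian_logarithmic_solution_existsUnique (f : ℚ⟦X⟧)
    (hf₀ : constantCoeff f = 1) (hf : L1 f = 0) :
    ∃! g : ℚ⟦X⟧, constantCoeff g = 0 ∧
      L1t (Polynomial.X * Polynomial.C f + Polynomial.C g) = 0 := by
  set M : ℚ⟦X⟧ := 4 * A4 * Dop^[3] f + 3 * A3 * Dop^[2] f + 2 * A2 * Dop f + A1 * f with hM
  have hM0 : constantCoeff (-M) = 0 := by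
    obtain ⟨h4, h3, h2, h1, h0⟩ := constCoeffs
    have d3 : Dop^[3] f = Dop (Dop^[2] f) := Function.iterate_succ_apply' Dop 2 f
    have d2 : Dop^[2] f = Dop (Dop f) := Function.iterate_succ_apply' Dop 1 f
    simp [hM, d3, d2, map_add, map_mul, constantCoeff_Dop, h1]
  obtain ⟨g, ⟨hg0, hg⟩, hu⟩ := existsUnique_L1 (-M) hM0
  have key : ∀ g' : ℚ⟦X⟧,
      L1t (Polynomial.X * Polynomial.C f + Polynomial.C g') = 0 ↔ L1 g' = -M := by
    intro g'
    rw [L1t_eq, hf]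
    simp only [map_zero, mul_zero, zero_add]
    rw [Polynomial.C_eq_zero]
    constructor
    · intro h; exact eq_neg_of_add_eq_zero_left h
    · intro h; rw [h]; ring
  refine ⟨g, ⟨hg0, (key g).mpr hg⟩, ?_⟩
  rintro g' ⟨hg'0, hg'⟩
  exact hu g' ⟨hg'0, (key g').mp hg'⟩
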